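/- Let 𝒜 : ℝ^{m×n} → ℝ^p be a linear map, let r, s ≥ 1 be integers, let 1 ≤ μ < √(mn)/(r√s), and set τ := (1 − μ²r²s/(mn))^{−1/2}. Let V₁, V₂ ⊆ ℝ^m and W₁, W₂ ⊆ ℝ^n be subspaces of dimension at most r, and let T ⊆ [m]×[n] with |T| ≤ s, such that Σ₁ = Σ_{m,n}(V₁,W₁,T,μ) and Σ₂ = Σ_{m,n}(V₂,W₂,T,μ) are defined (i.e. the incoherence conditions ‖P_{V_i} e_k‖₂ ≤ √(μr/m) and ‖P_{W_i} f_k‖₂ ≤ √(μr/n) hold). Suppose that for some Δ̄ > 0, every X ∈ Σ₁ satisfies (1−Δ̄)‖X‖_F ≤ ‖𝒜(X)‖₂ ≤ (1+Δ̄)‖X‖_F. Then every Y ∈ Σ₂ satisfies (1−Δ̄')‖Y‖_F ≤ ‖𝒜(Y)‖₂ ≤ (1+Δ̄')‖Y‖_F, where Δ̄' = Δ̄ + τ·ρ((V₁,W₁),(V₂,W₂))·(1 + Δ̄ + ‖𝒜‖), ρ((V₁,W₁),(V₂,W₂)) := ‖P_{(V₁,W₁)} − P_{(V₂,W₂)}‖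 is the operator norm (on ℝ^{m×n} with the Frobenius norm) of the difference of the orthogonal projections P_{(V,W)} : X ↦ P_V X P_W, and ‖𝒜‖ is the operator norm of 𝒜 from (ℝ^{m×n},‖·‖_F) to (ℝ^p,‖·‖₂). -/

import Mathlib

open scoped BigOperators
open Matrix

noncomputable section

def mInner {m n : ℕ} (A B : Matrix (Fin m) (Fin n) ℝ) : ℝ := ∑ i, ∑ j, A i j * B i j

def frobSq {m n : ℕ} (A : Matrix (Fin m) (Fin n) ℝ) : ℝ := ∑ i, ∑ j, (A i j) ^ 2

def frobNorm {m n : ℕ} (A : Matrix (Fin m) (Fin n) ℝ) : ℝ := Real.sqrt (frobSq A)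

def vInner {p : ℕ} (u v : Fin p → ℝ) : ℝ := ∑ i, u i * v i

def vNormSq {p : ℕ} (v : Fin p → ℝ) : ℝ := ∑ i, (v i) ^ 2

def vNorm {p : ℕ} (v : Fin p → ℝ) : ℝ := Real.sqrt (vNormSq v)

/-- Number of nonzero entries of a matrix. -/
def sparseCount {m n : ℕ} (S : Matrix (Fin m) (Fin n) ℝ) : ℕ :=
  {q : Fin m × Fin n | S q.1 q.2 ≠ 0}.ncard

/-- `L` is `μ`-incoherent of rank at most `r`: `rank L ≤ r` and `L` admits a (truncated)
singular value decomposition `L = U * diagonal d * Vᵀ` with `U ∈ ℝ^{m×r}`, `V ∈ ℝ^{n×r}`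
having orthonormal columns (the top `r` left/right singular vectors) whose rows satisfy
`‖Uᵀ eᵢ‖₂ ≤ √(μ r / m)` and `‖Vᵀ fⱼ‖₂ ≤ √(μ r / n)`. -/
def Incoherent {m n : ℕ} (μ : ℝ) (r : ℕ) (L : Matrix (Fin m) (Fin n) ℝ) : Prop :=
  L.rank ≤ r ∧
  ∃ (U : Matrix (Fin m) (Fin r) ℝ) (d : Fin r → ℝ) (V : Matrix (Fin n) (Fin r) ℝ),
    Uᵀ * U = 1 ∧ Vᵀ * V = 1 ∧ (∀ k, 0 ≤ d k) ∧ L = U * Matrix.diagonal d * Vᵀ ∧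
    (∀ i : Fin m, Real.sqrt (∑ k, (U i k) ^ 2) ≤ Real.sqrt (μ * r / m)) ∧
    (∀ j : Fin n, Real.sqrt (∑ k, (V j k) ^ 2) ≤ Real.sqrt (μ * r / n))

/-- The set of low-rank plus sparse matrices `LS_{m,n}(r,s,μ)`. -/
def LS (m n r s : ℕ) (μ : ℝ) : Set (Matrix (Fin m) (Fin n) ℝ) :=
  {X | ∃ L S : Matrix (Fin m) (Fin n) ℝ,
      X = L + S ∧ Incoherent μ r L ∧ sparseCount S ≤ s}

def opNorm {m n p : ℕ} (𝒜 : Matrix (Fin m) (Fin n) ℝ →ₗ[ℝ] (Fin p → ℝ)) : ℝ :=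
  sInf {c : ℝ | 0 ≤ c ∧ ∀ X : Matrix (Fin m) (Fin n) ℝ, vNorm (𝒜 X) ≤ c * frobNorm X}

/-- The fixed low-rank plus sparse subspace `Σ_{m,n}(V,W,T,μ)` (the incoherence conditions on
the subspaces `V`, `W` are imposed separately as hypotheses): matrices `L + S` with the
columns of `L` in `V`, the rows of `L` in `W`, and `S` supported in `T`. -/
def SigmaSet {m n : ℕ} (V : Submodule ℝ (EuclideanSpace ℝ (Fin m)))
    (W : Submodule ℝ (EuclideanSpace ℝ (Fin n))) (T : Set (Fin m × Fin n)) :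
    Set (Matrix (Fin m) (Fin n) ℝ) :=
  {X | ∃ L S : Matrix (Fin m) (Fin n) ℝ, X = L + S ∧
      (∀ j : Fin n, WithLp.toLp 2 (fun i => L i j) ∈ V) ∧
      (∀ i : Fin m, WithLp.toLp 2 (fun j => L i j) ∈ W) ∧
      (∀ i j, S i j ≠ 0 → (i, j) ∈ T)}

/-- The orthogonal projection `P_{(V,W)} : X ↦ P_V X P_W` on `ℝ^{m×n}`:
project each column of `X` onto `V` and each row onto `W`. -/
def projVW {m n : ℕ} (V : Submodule ℝ (EuclideanSpace ℝ (Fin m)))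
    (W : Submodule ℝ (EuclideanSpace ℝ (Fin n))) (X : Matrix (Fin m) (Fin n) ℝ) :
    Matrix (Fin m) (Fin n) ℝ :=
  fun i j =>
    (Submodule.orthogonalProjectionOnto W
      (WithLp.toLp 2 (fun j' => (Submodule.orthogonalProjectionOnto V
          (WithLp.toLp 2 (fun i' => X i' j') : EuclideanSpace ℝ (Fin m)) : EuclideanSpace ℝ (Fin m)) i)
        : EuclideanSpace ℝ (Fin n)) : EuclideanSpace ℝ (Fin n)) j

/-- The distance `ρ((V₁,W₁),(V₂,W₂)) = ‖P_{(V₁,W₁)} − P_{(V₂,W₂)}‖`, the operator norm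
(with respect to the Frobenius norm on ℝ^{m×n}) of the difference of the projections. -/
def rhoDist {m n : ℕ} (V₁ : Submodule ℝ (EuclideanSpace ℝ (Fin m)))
    (W₁ : Submodule ℝ (EuclideanSpace ℝ (Fin n)))
    (V₂ : Submodule ℝ (EuclideanSpace ℝ (Fin m)))
    (W₂ : Submodule ℝ (EuclideanSpace ℝ (Fin n))) : ℝ :=
  sInf {c : ℝ | 0 ≤ c ∧ ∀ X : Matrix (Fin m) (Fin n) ℝ,
    frobNorm (projVW V₁ W₁ X - projVW V₂ W₂ X) ≤ c * frobNorm X}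


namespace RipAux

variable {m n p : ℕ}

def toE (A : Matrix (Fin m) (Fin n) ℝ) : EuclideanSpace ℝ (Fin m × Fin n) := WithLp.toLp 2 (fun q => A q.1 q.2)
def toV (v : Fin p → ℝ) : EuclideanSpace ℝ (Fin p) := WithLp.toLp 2 v

lemma toE_add (A B : Matrix (Fin m) (Fin n) ℝ) : toE (A + B) = toE A + toE B := rfl
lemma toE_sub (A B : Matrix (Fin m) (Fin n) ℝ) : toE (A - B) = toE A - toE B := rfl
lemma toV_add (u v : Fin p → ℝ) : toV (u + v) = toV u + toV v := rfl

lemma frobNorm_eq (A : Matrix (Fin m) (Fin n) ℝ) : frobNorm A = ‖toE A‖ := by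
  rw [EuclideanSpace.norm_eq]
  simp [frobNorm, frobSq, toE, Real.norm_eq_abs, sq_abs, Fintype.sum_prod_type]

lemma vNorm_eq (v : Fin p → ℝ) : vNorm v = ‖toV v‖ := by
  rw [EuclideanSpace.norm_eq, vNorm, vNormSq]
  simp [toV, Real.norm_eq_abs, sq_abs]

lemma mInner_eq (A B : Matrix (Fin m) (Fin n) ℝ) :
    mInner A B = inner (𝕜 := ℝ) (toE A) (toE B) := by
  rw [PiLp.inner_apply]
  simp [mInner, toE, Fintype.sum_prod_type, mul_comm]

lemma frobSq_eq (A : Matrix (Fin m) (Fin n) ℝ) : frobSq A = frobNorm A ^ 2 := by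
  rw [frobNorm, Real.sq_sqrt]
  exact Finset.sum_nonneg fun i _ => Finset.sum_nonneg fun j _ => sq_nonneg _

lemma frobNorm_nonneg (A : Matrix (Fin m) (Fin n) ℝ) : 0 ≤ frobNorm A := Real.sqrt_nonneg _
lemma vNorm_nonneg (v : Fin p → ℝ) : 0 ≤ vNorm v := Real.sqrt_nonneg _

lemma frobSq_add (A B : Matrix (Fin m) (Fin n) ℝ) :
    frobSq (A + B) = frobSq A + 2 * mInner A B + frobSq B := by
  rw [frobSq_eq, frobSq_eq, frobSq_eq, frobNorm_eq, frobNorm_eq, frobNorm_eq, mInner_eq, toE_add]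
  exact norm_add_sq_real _ _

lemma abs_mInner_le (A B : Matrix (Fin m) (Fin n) ℝ) :
    |mInner A B| ≤ frobNorm A * frobNorm B := by
  rw [mInner_eq, frobNorm_eq, frobNorm_eq]
  exact abs_real_inner_le_norm _ _

lemma frobNorm_neg (A : Matrix (Fin m) (Fin n) ℝ) : frobNorm (-A) = frobNorm A := by
  rw [frobNorm_eq, frobNorm_eq, show toE (-A) = -toE A from rfl, norm_neg]

lemma vNorm_neg (v : Fin p → ℝ) : vNorm (-v) = vNorm v := by
  rw [vNorm_eq, vNorm_eq, show toV (-v) = -toV v from rfl, norm_neg]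

lemma vNorm_triangle (u v : Fin p → ℝ) : vNorm (u + v) ≤ vNorm u + vNorm v := by
  rw [vNorm_eq, vNorm_eq, vNorm_eq, toV_add]; exact norm_add_le _ _

lemma abs_frobNorm_sub_frobNorm (A B : Matrix (Fin m) (Fin n) ℝ) :
    |frobNorm A - frobNorm B| ≤ frobNorm (A - B) := by
  rw [frobNorm_eq, frobNorm_eq, frobNorm_eq, toE_sub]
  exact abs_norm_sub_norm_le _ _

/-- generic sInf bound lemma -/
lemma sInf_bound {X : Type*} (f g : X → ℝ) (hg : ∀ x, 0 ≤ g x)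
    (hne : ∃ c : ℝ, 0 ≤ c ∧ ∀ x, f x ≤ c * g x) :
    0 ≤ sInf {c : ℝ | 0 ≤ c ∧ ∀ x, f x ≤ c * g x} ∧
    ∀ x, f x ≤ sInf {c : ℝ | 0 ≤ c ∧ ∀ x, f x ≤ c * g x} * g x := by
  set S := {c : ℝ | 0 ≤ c ∧ ∀ x, f x ≤ c * g x} with hS
  have hSne : S.Nonempty := hne
  have h0 : 0 ≤ sInf S := le_csInf hSne fun c hc => hc.1
  refine ⟨h0, fun x => ?_⟩
  rcases eq_or_lt_of_le (hg x) with h | h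
  · obtain ⟨c, hc0, hc⟩ := hne
    have := hc x
    rw [← h] at this ⊢
    simpa using this.trans (by simp)
  · rw [← div_le_iff₀ h]
    exact le_csInf hSne fun c hc => (div_le_iff₀ h).mpr (hc.2 x)

/-- any linear map into vectors is Frobenius-bounded -/
lemma exists_bound_vec (B : Matrix (Fin m) (Fin n) ℝ →ₗ[ℝ] (Fin p → ℝ)) :
    ∃ c : ℝ, 0 ≤ c ∧ ∀ X, vNorm (B X) ≤ c * frobNorm X := by
  let B' : EuclideanSpace ℝ (Fin m × Fin n) →ₗ[ℝ] EuclideanSpace ℝ (Fin p) :=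
    { toFun := fun x => toV (B (fun i j => x (i, j)))
      map_add' := fun x y => congrArg toV (B.map_add (fun i j => x (i, j)) (fun i j => y (i, j)))
      map_smul' := fun c x => congrArg toV (B.map_smul c (fun i j => x (i, j))) }
  let C := LinearMap.toContinuousLinearMap B'
  refine ⟨‖C‖, norm_nonneg _, fun X => ?_⟩
  have h := C.le_opNorm (toE X)
  have hX : C (toE X) = toV (B X) := rfl
  rw [hX] at h
  rw [vNorm_eq, frobNorm_eq]
  exact h

/-- any linear map into matrices is Frobenius-bounded -/
lemma exists_bound_mat (B : Matrix (Fin m) (Fin n) ℝ →ₗ[ℝ] Matrix ((Fin m)) (Fin n) ℝ) :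
    ∃ c : ℝ, 0 ≤ c ∧ ∀ X, frobNorm (B X) ≤ c * frobNorm X := by
  let B' : EuclideanSpace ℝ (Fin m × Fin n) →ₗ[ℝ] EuclideanSpace ℝ (Fin m × Fin n) :=
    { toFun := fun x => toE (B (fun i j => x (i, j)))
      map_add' := fun x y => congrArg toE (B.map_add _ _)
      map_smul' := fun c x => congrArg toE (B.map_smul c (fun i j => x (i, j))) }
  let C := LinearMap.toContinuousLinearMap B'
  refine ⟨‖C‖, norm_nonneg _, fun X => ?_⟩
  have h := C.le_opNorm (toE X)
  have hX : C (toE X) = toE (B X) := rfl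
  rw [hX] at h
  rw [frobNorm_eq, frobNorm_eq (m := m)]
  exact h

lemma opNorm_spec (A : Matrix (Fin m) (Fin n) ℝ →ₗ[ℝ] (Fin p → ℝ)) :
    0 ≤ opNorm A ∧ ∀ X, vNorm (A X) ≤ opNorm A * frobNorm X :=
  sInf_bound _ _ frobNorm_nonneg (exists_bound_vec A)

def colProj (V : Submodule ℝ (EuclideanSpace ℝ (Fin m))) (X : Matrix (Fin m) (Fin n) ℝ) :
    Matrix (Fin m) (Fin n) ℝ :=
  fun i j => (Submodule.orthogonalProjectionOnto V (WithLp.toLp 2 (fun i' => X i' j) : EuclideanSpace ℝ (Fin m)) :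
    EuclideanSpace ℝ (Fin m)) i

def rowProj (W : Submodule ℝ (EuclideanSpace ℝ (Fin n))) (X : Matrix (Fin m) (Fin n) ℝ) :
    Matrix (Fin m) (Fin n) ℝ :=
  fun i j => (Submodule.orthogonalProjectionOnto W (WithLp.toLp 2 (fun j' => X i j') : EuclideanSpace ℝ (Fin n)) :
    EuclideanSpace ℝ (Fin n)) j

lemma projVW_eq (V : Submodule ℝ (EuclideanSpace ℝ (Fin m)))
    (W : Submodule ℝ (EuclideanSpace ℝ (Fin n))) (X : Matrix (Fin m) (Fin n) ℝ) :
    projVW V W X = rowProj W (colProj V X) := rfl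

lemma colProj_add (V : Submodule ℝ (EuclideanSpace ℝ (Fin m))) (X Y : Matrix (Fin m) (Fin n) ℝ) :
    colProj V (X + Y) = colProj V X + colProj V Y := by
  funext i j
  show (Submodule.orthogonalProjectionOnto V ((WithLp.toLp 2 (fun i' => X i' j) : EuclideanSpace ℝ (Fin m))
      + (WithLp.toLp 2 (fun i' => Y i' j) : EuclideanSpace ℝ (Fin m))) : EuclideanSpace ℝ (Fin m)) i = _
  rw [map_add]
  rfl

lemma colProj_smul (V : Submodule ℝ (EuclideanSpace ℝ (Fin m))) (c : ℝ)
    (X : Matrix (Fin m) (Fin n) ℝ) : colProj V (c • X) = c • colProj V X := by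
  funext i j
  show (Submodule.orthogonalProjectionOnto V (c • (WithLp.toLp 2 (fun i' => X i' j) : EuclideanSpace ℝ (Fin m)))
      : EuclideanSpace ℝ (Fin m)) i = _
  rw [_root_.map_smul]
  rfl

lemma rowProj_add (W : Submodule ℝ (EuclideanSpace ℝ (Fin n))) (X Y : Matrix (Fin m) (Fin n) ℝ) :
    rowProj W (X + Y) = rowProj W X + rowProj W Y := by
  funext i j
  show (Submodule.orthogonalProjectionOnto W ((WithLp.toLp 2 (fun j' => X i j') : EuclideanSpace ℝ (Fin n))
      + (WithLp.toLp 2 (fun j' => Y i j') : EuclideanSpace ℝ (Fin n))) : EuclideanSpace ℝ (Fin n)) j = _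
  rw [map_add]
  rfl

lemma rowProj_smul (W : Submodule ℝ (EuclideanSpace ℝ (Fin n))) (c : ℝ)
    (X : Matrix (Fin m) (Fin n) ℝ) : rowProj W (c • X) = c • rowProj W X := by
  funext i j
  show (Submodule.orthogonalProjectionOnto W (c • (WithLp.toLp 2 (fun j' => X i j') : EuclideanSpace ℝ (Fin n)))
      : EuclideanSpace ℝ (Fin n)) j = _
  rw [_root_.map_smul]
  rfl

def projDiff (V₁ V₂ : Submodule ℝ (EuclideanSpace ℝ (Fin m)))
    (W₁ W₂ : Submodule ℝ (EuclideanSpace ℝ (Fin n))) :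
    Matrix (Fin m) (Fin n) ℝ →ₗ[ℝ] Matrix (Fin m) (Fin n) ℝ where
  toFun X := projVW V₁ W₁ X - projVW V₂ W₂ X
  map_add' X Y := by
    simp only [projVW_eq, colProj_add, rowProj_add]
    abel
  map_smul' c X := by
    simp only [projVW_eq, colProj_smul, rowProj_smul, RingHom.id_apply, smul_sub]

lemma rhoDist_spec (V₁ V₂ : Submodule ℝ (EuclideanSpace ℝ (Fin m)))
    (W₁ W₂ : Submodule ℝ (EuclideanSpace ℝ (Fin n))) :
    0 ≤ rhoDist V₁ W₁ V₂ W₂ ∧ ∀ X : Matrix (Fin m) (Fin n) ℝ,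
      frobNorm (projVW V₁ W₁ X - projVW V₂ W₂ X) ≤ rhoDist V₁ W₁ V₂ W₂ * frobNorm X := by
  have := sInf_bound (fun X : Matrix (Fin m) (Fin n) ℝ =>
      frobNorm (projVW V₁ W₁ X - projVW V₂ W₂ X)) frobNorm frobNorm_nonneg ?_
  · exact this
  · obtain ⟨c, hc0, hc⟩ := exists_bound_mat (projDiff V₁ V₂ W₁ W₂)
    exact ⟨c, hc0, hc⟩

/-- decomposition of a Euclidean vector into singles -/
lemma eucl_decomp {k : ℕ} (z : EuclideanSpace ℝ (Fin k)) :
    z = ∑ l, z l • EuclideanSpace.single l (1 : ℝ) := by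
  ext a
  simp [EuclideanSpace.single_apply, Finset.sum_apply, Pi.single_apply]

lemma proj_apply_sum {k : ℕ} (W : Submodule ℝ (EuclideanSpace ℝ (Fin k)))
    (z : EuclideanSpace ℝ (Fin k)) (j : Fin k) :
    (Submodule.orthogonalProjectionOnto W z : EuclideanSpace ℝ (Fin k)) j =
      ∑ l, z l * (Submodule.orthogonalProjectionOnto W (EuclideanSpace.single l (1 : ℝ)) :
        EuclideanSpace ℝ (Fin k)) j := by
  conv_lhs => rw [eucl_decomp z]
  rw [map_sum]
  push_cast
  rw [WithLp.ofLp_sum, Finset.sum_apply]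
  congr 1
  funext l
  rw [_root_.map_smul]
  simp

/-- columns of projVW are in V -/
lemma projVW_col_mem (V : Submodule ℝ (EuclideanSpace ℝ (Fin m)))
    (W : Submodule ℝ (EuclideanSpace ℝ (Fin n))) (X : Matrix (Fin m) (Fin n) ℝ) (j : Fin n) :
    (WithLp.toLp 2 (fun i => projVW V W X i j) : EuclideanSpace ℝ (Fin m)) ∈ V := by
  have key : (WithLp.toLp 2 (fun i => projVW V W X i j) : EuclideanSpace ℝ (Fin m)) =
      ∑ l, ((Submodule.orthogonalProjectionOnto W (EuclideanSpace.single l (1:ℝ)) :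
          EuclideanSpace ℝ (Fin n)) j) •
        ((Submodule.orthogonalProjectionOnto V (WithLp.toLp 2 (fun i' => X i' l) : EuclideanSpace ℝ (Fin m)) :
          EuclideanSpace ℝ (Fin m))) := by
    ext i
    rw [WithLp.ofLp_sum, Finset.sum_apply]
    show projVW V W X i j = _
    unfold projVW
    rw [proj_apply_sum]
    congr 1
    funext l
    simp only [WithLp.ofLp_toLp, PiLp.smul_apply, smul_eq_mul]
    ring
  rw [key]
  exact Submodule.sum_mem V fun l _ => Submodule.smul_mem V _ (Submodule.orthogonalProjectionOnto _ _).2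

/-- rows of projVW are in W -/
lemma projVW_row_mem (V : Submodule ℝ (EuclideanSpace ℝ (Fin m)))
    (W : Submodule ℝ (EuclideanSpace ℝ (Fin n))) (X : Matrix (Fin m) (Fin n) ℝ) (i : Fin m) :
    (WithLp.toLp 2 (fun j => projVW V W X i j) : EuclideanSpace ℝ (Fin n)) ∈ W :=
  (Submodule.orthogonalProjectionOnto W _).2

/-- projVW fixes matrices with columns in V and rows in W -/
lemma projVW_eq_self (V : Submodule ℝ (EuclideanSpace ℝ (Fin m)))
    (W : Submodule ℝ (EuclideanSpace ℝ (Fin n))) (L : Matrix (Fin m) (Fin n) ℝ)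
    (hc : ∀ j, (WithLp.toLp 2 (fun i => L i j) : EuclideanSpace ℝ (Fin m)) ∈ V)
    (hr : ∀ i, (WithLp.toLp 2 (fun j => L i j) : EuclideanSpace ℝ (Fin n)) ∈ W) :
    projVW V W L = L := by
  funext i j
  unfold projVW
  have h1 : ∀ j', (Submodule.orthogonalProjectionOnto V (WithLp.toLp 2 (fun i' => L i' j') : EuclideanSpace ℝ (Fin m)) :
      EuclideanSpace ℝ (Fin m)) = WithLp.toLp 2 (fun i' => L i' j') :=
    fun j' => Submodule.starProjection_eq_self_iff.mpr (hc j')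
  simp only [h1, WithLp.ofLp_toLp]
  have h2 : (Submodule.orthogonalProjectionOnto W (WithLp.toLp 2 (fun j' => L i j') : EuclideanSpace ℝ (Fin n)) :
      EuclideanSpace ℝ (Fin n)) = WithLp.toLp 2 (fun j' => L i j') :=
    Submodule.starProjection_eq_self_iff.mpr (hr i)
  exact congrArg (fun v : EuclideanSpace ℝ (Fin n) => v j) h2

/-- entrywise incoherence bound -/
lemma entry_bound (V : Submodule ℝ (EuclideanSpace ℝ (Fin m)))
    (W : Submodule ℝ (EuclideanSpace ℝ (Fin n))) (L : Matrix (Fin m) (Fin n) ℝ)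
    (hc : ∀ j, (WithLp.toLp 2 (fun i => L i j) : EuclideanSpace ℝ (Fin m)) ∈ V)
    (hr : ∀ i, (WithLp.toLp 2 (fun j => L i j) : EuclideanSpace ℝ (Fin n)) ∈ W)
    (i : Fin m) (j : Fin n) :
    |L i j| ≤ ‖Submodule.orthogonalProjectionOnto V (EuclideanSpace.single i (1:ℝ))‖ *
      ‖Submodule.orthogonalProjectionOnto W (EuclideanSpace.single j (1:ℝ))‖ * frobNorm L := by
  set u : EuclideanSpace ℝ (Fin m) :=
    (Submodule.orthogonalProjectionOnto V (EuclideanSpace.single i (1:ℝ)) : EuclideanSpace ℝ (Fin m)) with hu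
  set v : EuclideanSpace ℝ (Fin n) :=
    (Submodule.orthogonalProjectionOnto W (EuclideanSpace.single j (1:ℝ)) : EuclideanSpace ℝ (Fin n)) with hv
  have stepA : ∀ j' : Fin n, L i j' = ∑ k, u k * L k j' := by
    intro j'
    have hmem := hc j'
    have h1 : inner (𝕜 := ℝ) (EuclideanSpace.single i (1:ℝ))
        (WithLp.toLp 2 (fun k => L k j') : EuclideanSpace ℝ (Fin m)) = L i j' := by
      rw [EuclideanSpace.inner_single_left]; simp
    have h2 : inner (𝕜 := ℝ) (EuclideanSpace.single i (1:ℝ))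
        (WithLp.toLp 2 (fun k => L k j') : EuclideanSpace ℝ (Fin m)) = inner (𝕜 := ℝ) u
        (WithLp.toLp 2 (fun k => L k j') : EuclideanSpace ℝ (Fin m)) := by
      rw [hu, ← Submodule.starProjection_apply,
        Submodule.inner_starProjection_left_eq_right, Submodule.starProjection_eq_self_iff.mpr hmem]
    rw [← h1, h2, PiLp.inner_apply]
    simp [RCLike.inner_apply, mul_comm]
  have stepB : ∀ k : Fin m, L k j = ∑ l, v l * L k l := by
    intro k
    have hmem := hr k
    have h1 : inner (𝕜 := ℝ) (EuclideanSpace.single j (1:ℝ))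
        (WithLp.toLp 2 (fun l => L k l) : EuclideanSpace ℝ (Fin n)) = L k j := by
      rw [EuclideanSpace.inner_single_left]; simp
    have h2 : inner (𝕜 := ℝ) (EuclideanSpace.single j (1:ℝ))
        (WithLp.toLp 2 (fun l => L k l) : EuclideanSpace ℝ (Fin n)) = inner (𝕜 := ℝ) v
        (WithLp.toLp 2 (fun l => L k l) : EuclideanSpace ℝ (Fin n)) := by
      rw [hv, ← Submodule.starProjection_apply,
        Submodule.inner_starProjection_left_eq_right, Submodule.starProjection_eq_self_iff.mpr hmem]
    rw [← h1, h2, PiLp.inner_apply]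
    simp [RCLike.inner_apply, mul_comm]
  have hentry : L i j = mInner L (Matrix.of fun k l => u k * v l) := by
    rw [stepA j, mInner]
    congr 1
    funext k
    rw [stepB k, Finset.mul_sum]
    congr 1
    funext l
    simp only [Matrix.of_apply]
    ring
  have hfrob : frobNorm (Matrix.of fun k l => u k * v l) = ‖u‖ * ‖v‖ := by
    rw [frobNorm, frobSq]
    have hkl : ∀ k l, (u k * v l) ^ 2 = u k ^ 2 * v l ^ 2 := fun k l => by ring
    simp only [Matrix.of_apply, hkl]
    rw [← Finset.sum_mul_sum]
    rw [Real.sqrt_mul (Finset.sum_nonneg fun k _ => sq_nonneg _)]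
    rw [EuclideanSpace.norm_eq, EuclideanSpace.norm_eq]
    simp [Real.norm_eq_abs, sq_abs]
  calc |L i j| = |mInner L (Matrix.of fun k l => u k * v l)| := by rw [hentry]
    _ ≤ frobNorm L * frobNorm (Matrix.of fun k l => u k * v l) := abs_mInner_le _ _
    _ = ‖u‖ * ‖v‖ * frobNorm L := by rw [hfrob]; ring

/-- sparse inner product bound -/
lemma mInner_sparse_bound (L S : Matrix (Fin m) (Fin n) ℝ) (a s' : ℝ)
    (ha : 0 ≤ a) (hentry : ∀ i j, |L i j| ≤ a * frobNorm L) (hs' : 0 ≤ s')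
    (hcard : ((Finset.univ.filter fun q : Fin m × Fin n => S q.1 q.2 ≠ 0).card : ℝ) ≤ s') :
    |mInner L S| ≤ a * Real.sqrt s' * (frobNorm L * frobNorm S) := by
  set F := Finset.univ.filter fun q : Fin m × Fin n => S q.1 q.2 ≠ 0 with hF
  have hprod : mInner L S = ∑ q : Fin m × Fin n, L q.1 q.2 * S q.1 q.2 := by
    rw [mInner]; simp [Fintype.sum_prod_type]
  have h1 : mInner L S = ∑ q ∈ F, L q.1 q.2 * S q.1 q.2 := by
    rw [hprod]
    refine (Finset.sum_subset (Finset.subset_univ F) ?_).symm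
    intro q _ hq
    simp only [hF, Finset.mem_filter, Finset.mem_univ, true_and, not_not] at hq
    rw [hq, mul_zero]
  have h2 : |mInner L S| ≤ ∑ q ∈ F, |L q.1 q.2| * |S q.1 q.2| := by
    rw [h1]
    refine (Finset.abs_sum_le_sum_abs _ _).trans ?_
    refine Finset.sum_le_sum fun q _ => ?_
    rw [abs_mul]
  have h3 : ∑ q ∈ F, |L q.1 q.2| * |S q.1 q.2| ≤ a * frobNorm L * ∑ q ∈ F, |S q.1 q.2| := by
    rw [Finset.mul_sum]
    exact Finset.sum_le_sum fun q _ => mul_le_mul_of_nonneg_right (hentry q.1 q.2) (abs_nonneg _)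
  have h4 : (∑ q ∈ F, |S q.1 q.2|) ≤ Real.sqrt s' * frobNorm S := by
    have hcs := Finset.sum_mul_sq_le_sq_mul_sq F (fun _ => (1:ℝ)) (fun q => |S q.1 q.2|)
    simp only [one_mul, one_pow] at hcs
    have hsum2 : ∑ q ∈ F, |S q.1 q.2| ^ 2 ≤ frobSq S := by
      have hfs : frobSq S = ∑ q : Fin m × Fin n, S q.1 q.2 ^ 2 := by
        rw [frobSq]; simp [Fintype.sum_prod_type]
      rw [hfs]
      have : ∀ q ∈ F, |S q.1 q.2| ^ 2 = S q.1 q.2 ^ 2 := fun q _ => sq_abs _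
      rw [Finset.sum_congr rfl this]
      exact Finset.sum_le_sum_of_subset_of_nonneg (Finset.subset_univ F)
        fun q _ _ => sq_nonneg _
    have hcardsum : (∑ q ∈ F, (1:ℝ)) = (F.card : ℝ) := by simp
    have hkey : (∑ q ∈ F, |S q.1 q.2|) ^ 2 ≤ s' * frobSq S := by
      calc (∑ q ∈ F, |S q.1 q.2|) ^ 2 ≤ (∑ _q ∈ F, (1:ℝ)) * ∑ q ∈ F, |S q.1 q.2| ^ 2 := hcs
        _ ≤ s' * frobSq S := by
            rw [hcardsum]
            exact mul_le_mul hcard hsum2 (Finset.sum_nonneg fun q _ => sq_nonneg _)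
              (le_trans (Nat.cast_nonneg _) hcard)
    have hrhs : s' * frobSq S = (Real.sqrt s' * frobNorm S) ^ 2 := by
      rw [frobSq_eq, mul_pow, Real.sq_sqrt hs']
    calc (∑ q ∈ F, |S q.1 q.2|)
        = Real.sqrt ((∑ q ∈ F, |S q.1 q.2|) ^ 2) :=
          (Real.sqrt_sq (Finset.sum_nonneg fun q _ => abs_nonneg _)).symm
      _ ≤ Real.sqrt ((Real.sqrt s' * frobNorm S) ^ 2) := by
          apply Real.sqrt_le_sqrt
          rw [← hrhs]
          exact hkey
      _ = Real.sqrt s' * frobNorm S :=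
          Real.sqrt_sq (mul_nonneg (Real.sqrt_nonneg _) (frobNorm_nonneg _))
  calc |mInner L S| ≤ a * frobNorm L * ∑ q ∈ F, |S q.1 q.2| := h2.trans h3
    _ ≤ a * frobNorm L * (Real.sqrt s' * frobNorm S) :=
        mul_le_mul_of_nonneg_left h4 (mul_nonneg ha (frobNorm_nonneg L))
    _ = a * Real.sqrt s' * (frobNorm L * frobNorm S) := by ring

lemma norm_decomp_bound (aL bS cY t β γ : ℝ)
    (hY : cY ^ 2 = aL ^ 2 + 2 * t + bS ^ 2) (ht : -(γ * (aL * bS)) ≤ t)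
    (hβ : β = 1 - γ ^ 2) : β * aL ^ 2 ≤ cY ^ 2 := by
  nlinarith [sq_nonneg (γ * aL - bS)]

lemma key_lower (Δ ρ τ K nX nY nAX nAY D : ℝ)
    (hΔ : 0 < Δ) (hρ0 : 0 ≤ ρ) (hτ0 : 0 ≤ τ) (hK0 : 0 ≤ K) (hY0 : 0 ≤ nY)
    (ha' : nX - nY ≤ ρ * (τ * nY)) (hb' : -(ρ * (τ * nY)) ≤ nX - nY)
    (hlo : (1 - Δ) * nX ≤ nAX) (tri2 : nAX ≤ nAY + D)
    (hD : D ≤ K * (ρ * (τ * nY))) :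
    (1 - (Δ + τ * ρ * (1 + Δ + K))) * nY ≤ nAY := by
  have hP0 : 0 ≤ ρ * (τ * nY) := by positivity
  have hkey : -((1 + Δ) * (ρ * (τ * nY))) ≤ (1 - Δ) * (nX - nY) := by
    rcases le_total 0 (1 - Δ) with h | h
    · have h2 := mul_le_mul_of_nonneg_left hb' h
      nlinarith
    · have h2 := mul_le_mul_of_nonpos_left ha' h
      nlinarith
  nlinarith

lemma key_upper (Δ ρ τ K nX nY nAX nAY D : ℝ)
    (hΔ : 0 < Δ) (hρ0 : 0 ≤ ρ) (hτ0 : 0 ≤ τ) (hK0 : 0 ≤ K) (hY0 : 0 ≤ nY)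
    (ha' : nX - nY ≤ ρ * (τ * nY))
    (hhi : nAX ≤ (1 + Δ) * nX) (tri1 : nAY ≤ nAX + D)
    (hD : D ≤ K * (ρ * (τ * nY))) :
    nAY ≤ (1 + (Δ + τ * ρ * (1 + Δ + K))) * nY := by
  have hP0 : 0 ≤ ρ * (τ * nY) := by positivity
  have h2 := mul_le_mul_of_nonneg_left ha' (by linarith : (0:ℝ) ≤ 1 + Δ)
  nlinarith

end RipAux

/-- variation of the RIC constant under a perturbation of `(V,W)`:
if the RIP holds on `Σ₁ = Σ_{m,n}(V₁,W₁,T,μ)` with constant `Δ̄`, it holds on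
`Σ₂ = Σ_{m,n}(V₂,W₂,T,μ)` with constant
`Δ̄' = Δ̄ + τ·ρ((V₁,W₁),(V₂,W₂))·(1 + Δ̄ + ‖𝒜‖)`, `τ = (1 − μ²r²s/(mn))^{−1/2}`. -/
theorem rip_perturbation
    (m n p r s : ℕ) (hr : 1 ≤ r) (hs : 1 ≤ s) (μ : ℝ) (hμ1 : 1 ≤ μ)
    (hμ : μ < Real.sqrt (m * n) / ((r : ℝ) * Real.sqrt s))
    (𝒜 : Matrix (Fin m) (Fin n) ℝ →ₗ[ℝ] (Fin p → ℝ))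
    (V₁ V₂ : Submodule ℝ (EuclideanSpace ℝ (Fin m)))
    (W₁ W₂ : Submodule ℝ (EuclideanSpace ℝ (Fin n)))
    (hV₁dim : Module.finrank ℝ V₁ ≤ r) (hV₂dim : Module.finrank ℝ V₂ ≤ r)
    (hW₁dim : Module.finrank ℝ W₁ ≤ r) (hW₂dim : Module.finrank ℝ W₂ ≤ r)
    (hV₁inc : ∀ i : Fin m,
      ‖Submodule.orthogonalProjectionOnto V₁ (EuclideanSpace.single i 1)‖ ≤ Real.sqrt (μ * r / m))
    (hV₂inc : ∀ i : Fin m,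
      ‖Submodule.orthogonalProjectionOnto V₂ (EuclideanSpace.single i 1)‖ ≤ Real.sqrt (μ * r / m))
    (hW₁inc : ∀ j : Fin n,
      ‖Submodule.orthogonalProjectionOnto W₁ (EuclideanSpace.single j 1)‖ ≤ Real.sqrt (μ * r / n))
    (hW₂inc : ∀ j : Fin n,
      ‖Submodule.orthogonalProjectionOnto W₂ (EuclideanSpace.single j 1)‖ ≤ Real.sqrt (μ * r / n))
    (T : Set (Fin m × Fin n)) (hT : T.ncard ≤ s)
    (Δ : ℝ) (hΔ : 0 < Δ)
    (hRIP : ∀ X ∈ SigmaSet V₁ W₁ T,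
      (1 - Δ) * frobNorm X ≤ vNorm (𝒜 X) ∧ vNorm (𝒜 X) ≤ (1 + Δ) * frobNorm X) :
    ∀ Y ∈ SigmaSet V₂ W₂ T,
      (1 - (Δ + (1 - μ ^ 2 * (r : ℝ) ^ 2 * s / ((m : ℝ) * n)) ^ (-(1/2) : ℝ) *
            rhoDist V₁ W₁ V₂ W₂ * (1 + Δ + opNorm 𝒜))) * frobNorm Y ≤ vNorm (𝒜 Y) ∧
      vNorm (𝒜 Y) ≤
        (1 + (Δ + (1 - μ ^ 2 * (r : ℝ) ^ 2 * s / ((m : ℝ) * n)) ^ (-(1/2) : ℝ) *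
            rhoDist V₁ W₁ V₂ W₂ * (1 + Δ + opNorm 𝒜))) * frobNorm Y := by
  classical
  intro Y hY
  obtain ⟨L, S, hYLS, hLcol, hLrow, hSsupp⟩ := hY
  -- basic positivity
  have hrR : (0:ℝ) < r := by exact_mod_cast hr
  have hsR : (0:ℝ) < Real.sqrt s := Real.sqrt_pos.mpr (by exact_mod_cast hs)
  have hrs : (0:ℝ) < (r : ℝ) * Real.sqrt s := mul_pos hrR hsR
  have hdiv : (0:ℝ) < Real.sqrt ((m:ℝ) * n) / ((r : ℝ) * Real.sqrt s) := by
    calc (0:ℝ) < 1 := one_pos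
      _ ≤ μ := hμ1
      _ < _ := hμ
  have hmnsqrt : (0:ℝ) < Real.sqrt ((m:ℝ) * n) := by
    by_contra h
    push_neg at h
    have : Real.sqrt ((m:ℝ) * n) / ((r : ℝ) * Real.sqrt s) ≤ 0 :=
      div_nonpos_of_nonpos_of_nonneg h hrs.le
    linarith
  have hmn : (0:ℝ) < (m:ℝ) * n := by
    by_contra h
    push_neg at h
    rw [Real.sqrt_eq_zero_of_nonpos h] at hmnsqrt
    exact lt_irrefl 0 hmnsqrt
  have hm : (0:ℝ) < (m:ℝ) := by
    rcases Nat.eq_zero_or_pos m with h | h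
    · subst h; simp at hmn
    · exact_mod_cast h
  have hn : (0:ℝ) < (n:ℝ) := by
    rcases Nat.eq_zero_or_pos n with h | h
    · subst h; simp at hmn
    · exact_mod_cast h
  have hμ0 : (0:ℝ) < μ := lt_of_lt_of_le one_pos hμ1
  -- incoherence constant
  set a : ℝ := Real.sqrt (μ * r / m) * Real.sqrt (μ * r / n) with ha_def
  have ha0 : 0 ≤ a := mul_nonneg (Real.sqrt_nonneg _) (Real.sqrt_nonneg _)
  have hasq : a ^ 2 = μ ^ 2 * (r:ℝ) ^ 2 / ((m:ℝ) * n) := by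
    rw [ha_def, mul_pow, Real.sq_sqrt (by positivity), Real.sq_sqrt (by positivity)]
    field_simp
  set γ : ℝ := a * Real.sqrt s with hγ_def
  have hγ0 : 0 ≤ γ := mul_nonneg ha0 (Real.sqrt_nonneg _)
  have hγsq : γ ^ 2 = μ ^ 2 * (r:ℝ) ^ 2 * s / ((m:ℝ) * n) := by
    rw [hγ_def, mul_pow, hasq, Real.sq_sqrt (Nat.cast_nonneg s)]
    ring
  have hlt : μ * ((r : ℝ) * Real.sqrt s) < Real.sqrt ((m:ℝ) * n) :=
    (lt_div_iff₀ hrs).mp hμ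
  have hsq_lt : μ ^ 2 * (r:ℝ) ^ 2 * s < (m:ℝ) * n := by
    have hl0 : 0 ≤ μ * ((r : ℝ) * Real.sqrt s) := by positivity
    have h2 := mul_self_lt_mul_self hl0 hlt
    rw [Real.mul_self_sqrt hmn.le] at h2
    have hss : Real.sqrt s * Real.sqrt s = (s:ℝ) := Real.mul_self_sqrt (Nat.cast_nonneg s)
    have h3 : μ ^ 2 * (r:ℝ) ^ 2 * s = μ * ((r : ℝ) * Real.sqrt s) * (μ * ((r : ℝ) * Real.sqrt s)) := by
      conv_lhs => rw [← hss]
      ring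
    linarith [h3 ▸ h2]
  have hγlt : γ < 1 := by
    have h1 : γ ^ 2 < 1 := by
      rw [hγsq]
      exact (div_lt_one hmn).mpr hsq_lt
    exact (pow_lt_one_iff_of_nonneg hγ0 two_ne_zero).mp h1
  -- τ
  set β : ℝ := 1 - μ ^ 2 * (r:ℝ) ^ 2 * s / ((m:ℝ) * n) with hβ_def
  have hβpos : 0 < β := by
    have h1 : μ ^ 2 * (r:ℝ) ^ 2 * s / ((m:ℝ) * n) < 1 := (div_lt_one hmn).mpr hsq_lt
    rw [hβ_def]
    linarith
  set τ : ℝ := β ^ (-(1/2) : ℝ) with hτ_def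
  have hτpos : 0 < τ := Real.rpow_pos_of_pos hβpos _
  have hτsq : τ ^ 2 * β = 1 := by
    rw [hτ_def, ← Real.rpow_natCast (β ^ (-(1/2) : ℝ)) 2, ← Real.rpow_mul hβpos.le]
    norm_num
    rw [Real.rpow_neg_one]
    exact inv_mul_cancel₀ hβpos.ne'
  -- entrywise bound on L
  have hentry : ∀ i j, |L i j| ≤ a * frobNorm L := by
    intro i j
    refine (RipAux.entry_bound V₂ W₂ L hLcol hLrow i j).trans ?_
    rw [ha_def]
    refine mul_le_mul_of_nonneg_right ?_ (RipAux.frobNorm_nonneg L)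
    exact mul_le_mul (hV₂inc i) (hW₂inc j) (norm_nonneg _) (Real.sqrt_nonneg _)
  -- support cardinality
  have hcard : ((Finset.univ.filter fun q : Fin m × Fin n => S q.1 q.2 ≠ 0).card : ℝ)
      ≤ (s : ℝ) := by
    have hset : ((Finset.univ.filter fun q : Fin m × Fin n => S q.1 q.2 ≠ 0) : Set _)
        = {q : Fin m × Fin n | S q.1 q.2 ≠ 0} := by
      ext q; simp
    have h1 : (Finset.univ.filter fun q : Fin m × Fin n => S q.1 q.2 ≠ 0).card
        = {q : Fin m × Fin n | S q.1 q.2 ≠ 0}.ncard := by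
      rw [← hset, Set.ncard_coe_finset]
    have h2 : {q : Fin m × Fin n | S q.1 q.2 ≠ 0}.ncard ≤ T.ncard :=
      Set.ncard_le_ncard (fun q hq => hSsupp q.1 q.2 hq) (Set.toFinite T)
    have h3 : (Finset.univ.filter fun q : Fin m × Fin n => S q.1 q.2 ≠ 0).card ≤ s :=
      h1 ▸ (h2.trans hT)
    exact_mod_cast h3
  -- inner product bound
  have hinner : |mInner L S| ≤ γ * (frobNorm L * frobNorm S) := by
    have := RipAux.mInner_sparse_bound L S a (s : ℝ) ha0 hentry (Nat.cast_nonneg s) hcard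
    rw [hγ_def]
    exact this
  -- norm comparison : frobNorm L ≤ τ * frobNorm Y
  have hYsq : frobNorm Y ^ 2 = frobNorm L ^ 2 + 2 * mInner L S + frobNorm S ^ 2 := by
    rw [← RipAux.frobSq_eq, ← RipAux.frobSq_eq, ← RipAux.frobSq_eq, hYLS, RipAux.frobSq_add]
  have hL0 := RipAux.frobNorm_nonneg L
  have hS0 := RipAux.frobNorm_nonneg S
  have hY0 := RipAux.frobNorm_nonneg Y
  have hLsq : β * frobNorm L ^ 2 ≤ frobNorm Y ^ 2 := by
    have habs := (abs_le.mp hinner).1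
    have hβγ : β = 1 - γ ^ 2 := by rw [hγsq]
    exact RipAux.norm_decomp_bound _ _ _ _ _ _ hYsq habs hβγ
  have hLY : frobNorm L ≤ τ * frobNorm Y := by
    have h1 : frobNorm L ^ 2 ≤ (τ * frobNorm Y) ^ 2 := by
      have h2 := mul_le_mul_of_nonneg_left hLsq (sq_nonneg τ)
      calc frobNorm L ^ 2 = τ ^ 2 * β * frobNorm L ^ 2 := by rw [hτsq]; ring
        _ = τ ^ 2 * (β * frobNorm L ^ 2) := by ring
        _ ≤ τ ^ 2 * frobNorm Y ^ 2 := h2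
        _ = (τ * frobNorm Y) ^ 2 := by ring
    calc frobNorm L = Real.sqrt (frobNorm L ^ 2) := (Real.sqrt_sq hL0).symm
      _ ≤ Real.sqrt ((τ * frobNorm Y) ^ 2) := Real.sqrt_le_sqrt h1
      _ = τ * frobNorm Y := Real.sqrt_sq (by positivity)
  -- the comparison matrix X
  set X : Matrix (Fin m) (Fin n) ℝ := projVW V₁ W₁ L + S with hX_def
  have hXmem : X ∈ SigmaSet V₁ W₁ T :=
    ⟨projVW V₁ W₁ L, S, rfl, fun j => RipAux.projVW_col_mem V₁ W₁ L j,
      fun i => RipAux.projVW_row_mem V₁ W₁ L i, hSsupp⟩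
  obtain ⟨hlo, hhi⟩ := hRIP X hXmem
  set ρ : ℝ := rhoDist V₁ W₁ V₂ W₂ with hρ_def
  obtain ⟨hρ0, hρ⟩ := RipAux.rhoDist_spec V₁ V₂ W₁ W₂
  set K : ℝ := opNorm 𝒜 with hK_def
  obtain ⟨hK0, hK⟩ := RipAux.opNorm_spec 𝒜
  -- difference bound
  have hfix : projVW V₂ W₂ L = L := RipAux.projVW_eq_self V₂ W₂ L hLcol hLrow
  have hYXeq : Y - X = -(projVW V₁ W₁ L - projVW V₂ W₂ L) := by
    rw [hYLS, hX_def, hfix]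
    abel
  have e1 : frobNorm (Y - X) ≤ ρ * (τ * frobNorm Y) := by
    rw [hYXeq, RipAux.frobNorm_neg]
    calc frobNorm (projVW V₁ W₁ L - projVW V₂ W₂ L) ≤ ρ * frobNorm L := hρ L
      _ ≤ ρ * (τ * frobNorm Y) := mul_le_mul_of_nonneg_left hLY hρ0
  have e2 : |frobNorm X - frobNorm Y| ≤ ρ * (τ * frobNorm Y) := by
    refine (RipAux.abs_frobNorm_sub_frobNorm X Y).trans ?_
    rw [show X - Y = -(Y - X) by abel, RipAux.frobNorm_neg]
    exact e1
  have hD : vNorm (𝒜 (Y - X)) ≤ K * (ρ * (τ * frobNorm Y)) :=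
    (hK (Y - X)).trans (mul_le_mul_of_nonneg_left e1 hK0)
  have hD0 : 0 ≤ vNorm (𝒜 (Y - X)) := RipAux.vNorm_nonneg _
  have tri1 : vNorm (𝒜 Y) ≤ vNorm (𝒜 X) + vNorm (𝒜 (Y - X)) := by
    have h : 𝒜 Y = 𝒜 X + 𝒜 (Y - X) := by
      rw [← map_add, add_sub_cancel]
    rw [h]
    exact RipAux.vNorm_triangle _ _
  have tri2 : vNorm (𝒜 X) ≤ vNorm (𝒜 Y) + vNorm (𝒜 (Y - X)) := by
    have h : 𝒜 X = 𝒜 Y + -(𝒜 (Y - X)) := by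
      rw [← map_neg, ← map_add, neg_sub, add_sub_cancel]
    rw [h]
    exact (RipAux.vNorm_triangle _ _).trans (by rw [RipAux.vNorm_neg])
  have hX0 := RipAux.frobNorm_nonneg X
  have hP0 : 0 ≤ ρ * (τ * frobNorm Y) := by positivity
  obtain ⟨ha', hb'⟩ := abs_le.mp e2
  constructor
  · exact RipAux.key_lower Δ ρ τ K (frobNorm X) (frobNorm Y) (vNorm (𝒜 X)) (vNorm (𝒜 Y))
      (vNorm (𝒜 (Y - X))) hΔ hρ0 hτpos.le hK0 hY0 hb' ha' hlo tri2 hD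
  · exact RipAux.key_upper Δ ρ τ K (frobNorm X) (frobNorm Y) (vNorm (𝒜 X)) (vNorm (𝒜 Y))
      (vNorm (𝒜 (Y - X))) hΔ hρ0 hτpos.le hK0 hY0 hb' hhi tri1 hD
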